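/- For every n ∈ ℕ one has Σ_{m=0}^∞ q^{m(n+1)} ∏_{i=1}^∞ (1−q^{m+i}) = ∏_{i=1}^{n} (1−q^{i}), where for n = 0 the right-hand side is the empty product 1 (so in particular the series Σ_{m=0}^∞ q^m ∏_{i=1}^∞ (1−q^{m+i}) sums to 1). -/

import Mathlib

open Real Filter

noncomputable def Qf (q : ℝ) (m : ℕ) : ℝ := ∏' i : ℕ, (1 - q ^ (m + i + 1))

section
variable {q : ℝ}

lemma fpos (hq0 : 0 < q) (hq1 : q < 1) (m i : ℕ) : 0 < 1 - q ^ (m + i + 1) := by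
  have : q ^ (m + i + 1) < 1 := pow_lt_one₀ hq0.le hq1 (by omega)
  linarith

lemma summable_log (hq0 : 0 < q) (hq1 : q < 1) (m : ℕ) :
    Summable (fun i : ℕ => Real.log (1 - q ^ (m + i + 1))) := by
  have hgeo : Summable (fun i : ℕ => (1 - q)⁻¹ * q ^ (m + 1) * q ^ i) :=
    ((summable_geometric_of_lt_one hq0.le hq1).mul_left _)
  apply Summable.of_norm_bounded hgeo
  intro i
  set x := q ^ (m + i + 1) with hx
  have hxpos : 0 < x := pow_pos hq0 _
  have hx1 : 0 < 1 - x := fpos hq0 hq1 m i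
  have hlog : Real.log (1 - x) ≤ 0 := Real.log_nonpos hx1.le (by linarith)
  have h2 : -Real.log (1 - x) = Real.log (1 - x)⁻¹ := (Real.log_inv _).symm
  have h3 : Real.log (1 - x)⁻¹ ≤ (1 - x)⁻¹ - 1 :=
    Real.log_le_sub_one_of_pos (by positivity)
  have h4 : (1 - x)⁻¹ - 1 = x / (1 - x) := by field_simp; ring
  have h5 : x / (1 - x) ≤ x / (1 - q) := by
    apply div_le_div_of_nonneg_left hxpos.le (by linarith)
    have : x ≤ q := by
      calc x = q ^ (m + i + 1) := hx
      _ ≤ q ^ 1 := pow_le_pow_of_le_one hq0.le hq1.le (by omega)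
      _ = q := pow_one q
    linarith
  have h6 : x / (1 - q) = (1 - q)⁻¹ * q ^ (m + 1) * q ^ i := by
    rw [hx, show m + i + 1 = (m + 1) + i by omega, pow_add, div_eq_inv_mul]
    ring
  rw [Real.norm_eq_abs, abs_of_nonpos hlog, ← h6]
  linarith [h2, h3, h4, h5]

lemma QhasProd (hq0 : 0 < q) (hq1 : q < 1) (m : ℕ) :
    HasProd (fun i : ℕ => 1 - q ^ (m + i + 1))
      (Real.exp (∑' i : ℕ, Real.log (1 - q ^ (m + i + 1)))) := by
  have h := (summable_log hq0 hq1 m).hasSum.rexp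
  have h2 : (Real.exp ∘ fun i : ℕ => Real.log (1 - q ^ (m + i + 1)))
      = fun i : ℕ => 1 - q ^ (m + i + 1) :=
    funext fun i => Real.exp_log (fpos hq0 hq1 m i)
  rwa [h2] at h

lemma Qpos (hq0 : 0 < q) (hq1 : q < 1) (m : ℕ) : 0 < Qf q m := by
  rw [Qf, (QhasProd hq0 hq1 m).tprod_eq]; exact Real.exp_pos _

lemma Qle1 (hq0 : 0 < q) (hq1 : q < 1) (m : ℕ) : Qf q m ≤ 1 := by
  rw [Qf, (QhasProd hq0 hq1 m).tprod_eq]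
  rw [Real.exp_le_one_iff]
  apply tsum_nonpos
  intro i
  exact Real.log_nonpos (fpos hq0 hq1 m i).le
    (by nlinarith [pow_pos hq0 (m + i + 1)])

lemma Qrec (hq0 : 0 < q) (hq1 : q < 1) (m : ℕ) :
    Qf q m = (1 - q ^ (m + 1)) * Qf q (m + 1) := by
  have he : (fun i : ℕ => 1 - q ^ (m + 1 + i + 1))
      = fun i : ℕ => 1 - q ^ (m + (i + 1) + 1) := by
    funext i; ring_nf
  have hm1 : Multipliable (fun i : ℕ => 1 - q ^ (m + (i + 1) + 1)) := by
    have h := (QhasProd hq0 hq1 (m + 1)).multipliable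
    rwa [he] at h
  have h2 : Qf q (m + 1) = ∏' i : ℕ, (1 - q ^ (m + (i + 1) + 1)) := by
    rw [Qf, he]
  rw [Qf, tprod_eq_zero_mul' (f := fun i : ℕ => 1 - q ^ (m + i + 1)) hm1, ← h2]

lemma Qtel (hq0 : 0 < q) (hq1 : q < 1) (M : ℕ) :
    Qf q 0 = (∏ i ∈ Finset.range M, (1 - q ^ (i + 1))) * Qf q M := by
  induction M with
  | zero => simp
  | succ M ih =>
    rw [ih, Finset.prod_range_succ, Qrec hq0 hq1 M]
    ring

lemma Qtendsto (hq0 : 0 < q) (hq1 : q < 1) :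
    Tendsto (fun M => Qf q M) atTop (nhds 1) := by
  have hP : Tendsto (fun M => ∏ i ∈ Finset.range M, (1 - q ^ (i + 1)))
      atTop (nhds (Qf q 0)) := by
    have h := (QhasProd hq0 hq1 0).tendsto_prod_nat
    have heq : (fun M => ∏ i ∈ Finset.range M, (1 - q ^ (0 + i + 1)))
        = fun M => ∏ i ∈ Finset.range M, (1 - q ^ (i + 1)) := by
      funext M
      exact Finset.prod_congr rfl fun i _ => by ring_nf
    rw [heq] at h
    rw [Qf, (QhasProd hq0 hq1 0).tprod_eq]
    exact h
  have hQ0 : Qf q 0 ≠ 0 := (Qpos hq0 hq1 0).ne'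
  have key : ∀ M, Qf q M = Qf q 0 / ∏ i ∈ Finset.range M, (1 - q ^ (i + 1)) := by
    intro M
    have hPne : (∏ i ∈ Finset.range M, (1 - q ^ (i + 1))) ≠ 0 := by
      apply Finset.prod_ne_zero_iff.mpr
      intro i _
      have := fpos hq0 hq1 i 0
      simp only [add_zero] at this
      linarith [this]
    rw [Qtel hq0 hq1 M]
    field_simp
  have hfun : (fun M => Qf q M)
      = fun M => Qf q 0 / ∏ i ∈ Finset.range M, (1 - q ^ (i + 1)) := funext key
  rw [hfun]
  have := (tendsto_const_nhds (x := Qf q 0) (f := atTop (α := ℕ))).div hP hQ0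
  rw [div_self hQ0] at this; exact this

lemma Ssummable (hq0 : 0 < q) (hq1 : q < 1) (k : ℕ) (hk : 0 < k) :
    Summable (fun m : ℕ => q ^ (m * k) * Qf q m) := by
  apply Summable.of_nonneg_of_le
    (fun m => mul_nonneg (pow_nonneg hq0.le _) (Qpos hq0 hq1 m).le)
    (fun m => ?_) (summable_geometric_of_lt_one hq0.le hq1)
  calc q ^ (m * k) * Qf q m ≤ q ^ m * 1 := by
        apply mul_le_mul
        · exact pow_le_pow_of_le_one hq0.le hq1.le (Nat.le_mul_of_pos_right m hk)
        · exact Qle1 hq0 hq1 m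
        · exact (Qpos hq0 hq1 m).le
        · exact (pow_pos hq0 m).le
  _ = q ^ m := mul_one _

lemma Sbase (hq0 : 0 < q) (hq1 : q < 1) :
    ∑' m : ℕ, q ^ m * Qf q m = 1 := by
  have hsum : Summable (fun m : ℕ => q ^ m * Qf q m) := by
    have h := Ssummable hq0 hq1 1 one_pos
    simp only [mul_one] at h
    exact h
  have key : ∀ M : ℕ, ∑ m ∈ Finset.range (M + 1), q ^ m * Qf q m = Qf q M := by
    intro M
    induction M with
    | zero => simp
    | succ M ih =>
      rw [Finset.sum_range_succ, ih, Qrec hq0 hq1 M]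
      ring
  have h1 : Tendsto (fun M : ℕ => ∑ m ∈ Finset.range M, q ^ m * Qf q m)
      atTop (nhds 1) := by
    rw [← tendsto_add_atTop_iff_nat 1]
    simp only [key]
    exact Qtendsto hq0 hq1
  exact tendsto_nhds_unique hsum.hasSum.tendsto_sum_nat h1

lemma Sstep (hq0 : 0 < q) (hq1 : q < 1) (n : ℕ) :
    ∑' m : ℕ, q ^ (m * (n + 2)) * Qf q m
      = (1 - q ^ (n + 1)) * ∑' m : ℕ, q ^ (m * (n + 1)) * Qf q m := by
  have hg1 := Ssummable hq0 hq1 (n + 1) (by omega)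
  have hg2 := Ssummable hq0 hq1 (n + 2) (by omega)
  have hsub : Summable (fun m : ℕ =>
      q ^ (m * (n + 1)) * Qf q m - q ^ (m * (n + 2)) * Qf q m) := hg1.sub hg2
  have hpt : ∀ m : ℕ,
      q ^ ((m + 1) * (n + 1)) * Qf q (m + 1) - q ^ ((m + 1) * (n + 2)) * Qf q (m + 1)
        = q ^ (n + 1) * (q ^ (m * (n + 1)) * Qf q m) := by
    intro m
    rw [Qrec hq0 hq1 m]
    have e1 : (m + 1) * (n + 1) = m * (n + 1) + (n + 1) := by ring
    have e2 : (m + 1) * (n + 2) = m * (n + 1) + (n + 1) + (m + 1) := by ring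
    rw [e1, e2, pow_add, pow_add, pow_add]
    ring
  have htel : ∑' m : ℕ, (q ^ (m * (n + 1)) * Qf q m - q ^ (m * (n + 2)) * Qf q m)
      = q ^ (n + 1) * ∑' m : ℕ, q ^ (m * (n + 1)) * Qf q m := by
    rw [Summable.tsum_eq_zero_add hsub]
    simp only [hpt]
    rw [tsum_mul_left]
    simp
  rw [Summable.tsum_sub hg1 hg2] at htel
  linarith [htel]

end

theorem stmt2 (q : ℝ) (hq0 : 0 < q) (hq1 : q < 1) (n : ℕ) :
    ∑' m : ℕ, q ^ (m * (n + 1)) * (∏' i : ℕ, (1 - q ^ (m + i + 1)))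
      = ∏ i ∈ Finset.range n, (1 - q ^ (i + 1)) := by
  show ∑' m : ℕ, q ^ (m * (n + 1)) * Qf q m = _
  induction n with
  | zero => simpa using Sbase hq0 hq1
  | succ n ih =>
    have := Sstep hq0 hq1 n
    rw [Finset.prod_range_succ, ← ih]
    calc ∑' m : ℕ, q ^ (m * (n + 1 + 1)) * Qf q m
        = (1 - q ^ (n + 1)) * ∑' m : ℕ, q ^ (m * (n + 1)) * Qf q m := this
    _ = (∑' m : ℕ, q ^ (m * (n + 1)) * Qf q m) * (1 - q ^ (n + 1)) := by ring
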